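/- Let f be a k×k Hermitian positive definite matrix partitioned into blocks f_AA (α×α), f_AB, f_BA, f_BB with f_AB* = f_BA. Let σ1 > 0 be the smallest and σk the largest eigenvalue of f. Then f_AA^{-1/2} f_AB f_BB^{-1} f_BA f_AA^{-1/2} ≤_L (1 - σ1/σk) I_α in the Loewner order. -/

import Mathlib

open scoped ComplexOrder

namespace Matrix.PosSemidef

/-- The positive semidefinite square root of a positive semidefinite matrix
(restored with its definition from the older Mathlib, where it has since been removed). -/
noncomputable def sqrt {n : Type*} [Fintype n] [DecidableEq n] {𝕜 : Type*} [RCLike 𝕜]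
    {A : Matrix n n 𝕜} (hA : A.PosSemidef) : Matrix n n 𝕜 :=
  hA.1.eigenvectorUnitary.1 * Matrix.diagonal ((↑) ∘ (√·) ∘ hA.1.eigenvalues) *
  (star hA.1.eigenvectorUnitary : Matrix n n 𝕜)

lemma posSemidef_sqrt {n : Type*} [Fintype n] [DecidableEq n] {𝕜 : Type*} [RCLike 𝕜]
    {A : Matrix n n 𝕜} (hA : A.PosSemidef) : hA.sqrt.PosSemidef := by
  unfold sqrt
  have hd : (Matrix.diagonal ((↑) ∘ (√·) ∘ hA.1.eigenvalues : n → 𝕜)).PosSemidef :=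
    Matrix.posSemidef_diagonal_iff.mpr fun i => by
      simp only [Function.comp_apply]
      exact RCLike.ofReal_nonneg.mpr (Real.sqrt_nonneg _)
  simpa [Matrix.star_eq_conjTranspose, Unitary.coe_star] using
    hd.mul_mul_conjTranspose_same (hA.1.eigenvectorUnitary : Matrix n n 𝕜)

lemma sqrt_mul_self {n : Type*} [Fintype n] [DecidableEq n] {𝕜 : Type*} [RCLike 𝕜]
    {A : Matrix n n 𝕜} (hA : A.PosSemidef) : hA.sqrt * hA.sqrt = A := by
  unfold sqrt
  have hUU : star (hA.1.eigenvectorUnitary : Matrix n n 𝕜) * hA.1.eigenvectorUnitary = 1 :=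
    Matrix.mem_unitaryGroup_iff'.mp hA.1.eigenvectorUnitary.2
  simp only [Matrix.mul_assoc]
  rw [← Matrix.mul_assoc (star _) (hA.1.eigenvectorUnitary : Matrix n n 𝕜), hUU, Matrix.one_mul,
    ← Matrix.mul_assoc (Matrix.diagonal _) (Matrix.diagonal _), Matrix.diagonal_mul_diagonal]
  have hdd : (Matrix.diagonal fun i => ((↑) ∘ (√·) ∘ hA.1.eigenvalues : n → 𝕜) i *
      ((↑) ∘ (√·) ∘ hA.1.eigenvalues : n → 𝕜) i) = Matrix.diagonal (RCLike.ofReal ∘ hA.1.eigenvalues) := by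
    congr 1
    funext i
    simp only [Function.comp_apply, ← RCLike.ofReal_mul, Real.mul_self_sqrt (hA.eigenvalues_nonneg i)]
  rw [hdd, ← Matrix.mul_assoc]
  exact hA.1.spectral_theorem.symm

end Matrix.PosSemidef

open Matrix

section Aux

variable {m n : Type*} [Fintype m] [DecidableEq m] [Fintype n] [DecidableEq n]

lemma aux_smul_psd {M : Matrix m m ℂ} (hM : M.PosSemidef) {c : ℝ} (hc : 0 ≤ c) :
    ((c : ℂ) • M).PosSemidef := by
  refine Matrix.PosSemidef.of_dotProduct_mulVec_nonneg ?_ (fun x => ?_)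
  · unfold Matrix.IsHermitian
    rw [conjTranspose_smul, hM.isHermitian.eq]
    congr 1
    simp
  · rw [smul_mulVec, dotProduct_smul, smul_eq_mul]
    exact mul_nonneg (by exact_mod_cast hc) (hM.dotProduct_mulVec_nonneg x)

lemma aux_sub_smul_one {f : Matrix m m ℂ} (hf : f.IsHermitian) {μ : ℝ}
    (h : ∀ i, μ ≤ hf.eigenvalues i) : (f - (μ : ℂ) • 1).PosSemidef := by
  set U : Matrix m m ℂ := (hf.eigenvectorUnitary : Matrix m m ℂ) with hU
  have hUU : U * star U = 1 := Matrix.mem_unitaryGroup_iff.mp hf.eigenvectorUnitary.2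
  have key : U * diagonal (fun i => ((hf.eigenvalues i - μ : ℝ) : ℂ)) * star U
      = f - (μ : ℂ) • 1 := by
    have hD : diagonal (fun i => ((hf.eigenvalues i - μ : ℝ) : ℂ))
        = diagonal (RCLike.ofReal ∘ hf.eigenvalues) - (μ : ℂ) • 1 := by
      rw [smul_one_eq_diagonal, diagonal_sub]
      congr 1
      funext i
      push_cast
      rfl
    rw [hD, Matrix.mul_sub, Matrix.sub_mul, Matrix.mul_smul, Matrix.mul_one, smul_mul_assoc,
      hUU]
    exact congrArg (· - (μ : ℂ) • 1) hf.spectral_theorem.symm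
  rw [← key]
  have hd : (Matrix.diagonal (fun i => ((hf.eigenvalues i - μ : ℝ) : ℂ))).PosSemidef :=
    Matrix.posSemidef_diagonal_iff.mpr fun i => by
      rw [Complex.zero_le_real]; linarith [h i]
  simpa [Matrix.star_eq_conjTranspose] using hd.mul_mul_conjTranspose_same U

lemma aux_smul_one_sub {f : Matrix m m ℂ} (hf : f.IsHermitian) {μ : ℝ}
    (h : ∀ i, hf.eigenvalues i ≤ μ) : ((μ : ℂ) • 1 - f).PosSemidef := by
  set U : Matrix m m ℂ := (hf.eigenvectorUnitary : Matrix m m ℂ) with hU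
  have hUU : U * star U = 1 := Matrix.mem_unitaryGroup_iff.mp hf.eigenvectorUnitary.2
  have key : U * diagonal (fun i => ((μ - hf.eigenvalues i : ℝ) : ℂ)) * star U
      = (μ : ℂ) • 1 - f := by
    have hD : diagonal (fun i => ((μ - hf.eigenvalues i : ℝ) : ℂ))
        = (μ : ℂ) • 1 - diagonal (RCLike.ofReal ∘ hf.eigenvalues) := by
      rw [smul_one_eq_diagonal, diagonal_sub]
      congr 1
      funext i
      push_cast
      rfl
    rw [hD, Matrix.mul_sub, Matrix.sub_mul, Matrix.mul_smul, Matrix.mul_one, smul_mul_assoc,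
      hUU]
    exact congrArg ((μ : ℂ) • 1 - ·) hf.spectral_theorem.symm
  rw [← key]
  have hd : (Matrix.diagonal (fun i => ((μ - hf.eigenvalues i : ℝ) : ℂ))).PosSemidef :=
    Matrix.posSemidef_diagonal_iff.mpr fun i => by
      rw [Complex.zero_le_real]; linarith [h i]
  simpa [Matrix.star_eq_conjTranspose] using hd.mul_mul_conjTranspose_same U

lemma aux_posDef_inl {f : Matrix (m ⊕ n) (m ⊕ n) ℂ} (hf : f.PosDef) :
    (f.submatrix Sum.inl Sum.inl).PosDef := by
  refine Matrix.PosDef.of_dotProduct_mulVec_pos (hf.isHermitian.submatrix _) (fun x hx => ?_)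
  have hx' : Sum.elim x (0 : n → ℂ) ≠ 0 :=
    fun h => hx (funext fun i => congrFun h (Sum.inl i))
  have h := hf.dotProduct_mulVec_pos hx'
  have hstar : star (Sum.elim x (0 : n → ℂ)) = Sum.elim (star x) 0 := by
    funext i; cases i <;> simp
  rw [hstar, ← Matrix.fromBlocks_toBlocks f, Matrix.fromBlocks_mulVec,
    sumElim_dotProduct_sumElim] at h
  exact (by simpa [Matrix.mulVec_zero] using h : _)

lemma aux_posDef_inr {f : Matrix (m ⊕ n) (m ⊕ n) ℂ} (hf : f.PosDef) :
    (f.submatrix Sum.inr Sum.inr).PosDef := by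
  refine Matrix.PosDef.of_dotProduct_mulVec_pos (hf.isHermitian.submatrix _) (fun x hx => ?_)
  have hx' : Sum.elim (0 : m → ℂ) x ≠ 0 :=
    fun h => hx (funext fun i => congrFun h (Sum.inr i))
  have h := hf.dotProduct_mulVec_pos hx'
  have hstar : star (Sum.elim (0 : m → ℂ) x) = Sum.elim (0 : m → ℂ) (star x) := by
    funext i; cases i <;> simp
  rw [hstar, ← Matrix.fromBlocks_toBlocks f, Matrix.fromBlocks_mulVec,
    sumElim_dotProduct_sumElim] at h
  exact (by simpa [Matrix.mulVec_zero] using h : _)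

lemma aux_fromBlocks_diag_psd {M : Matrix m m ℂ} {N : Matrix n n ℂ}
    (hM : M.PosSemidef) (hN : N.PosSemidef) :
    (Matrix.fromBlocks M 0 0 N).PosSemidef := by
  have key : Matrix.fromBlocks M 0 0 N
      = (Matrix.fromBlocks hM.sqrt 0 0 hN.sqrt)ᴴ * Matrix.fromBlocks hM.sqrt 0 0 hN.sqrt := by
    rw [Matrix.fromBlocks_conjTranspose, Matrix.fromBlocks_multiply]
    simp [hM.posSemidef_sqrt.isHermitian.eq, hN.posSemidef_sqrt.isHermitian.eq,
      hM.sqrt_mul_self, hN.sqrt_mul_self]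
  rw [key]
  exact Matrix.posSemidef_conjTranspose_mul_self _

end Aux

/-- For a Hermitian positive definite block matrix `f` with smallest eigenvalue `σ1 > 0`
and largest eigenvalue `σk`, the multiple coherence satisfies
`f_AA^{-1/2} f_AB f_BB⁻¹ f_BA f_AA^{-1/2} ≤_L (1 - σ1/σk) I`. -/
theorem coherence_loewner_bound {a b : ℕ}
    (f : Matrix (Fin a ⊕ Fin b) (Fin a ⊕ Fin b) ℂ) (hf : f.PosDef)
    (σ1 σk : ℝ) (hσ1pos : 0 < σ1)
    (h1 : IsLeast (Set.range hf.isHermitian.eigenvalues) σ1)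
    (hk : IsGreatest (Set.range hf.isHermitian.eigenvalues) σk) :
    (((1 - σ1 / σk : ℝ) : ℂ) • (1 : Matrix (Fin a) (Fin a) ℂ)
      - ((hf.posSemidef.submatrix Sum.inl).sqrt)⁻¹
        * f.submatrix Sum.inl Sum.inr
        * (f.submatrix Sum.inr Sum.inr)⁻¹
        * f.submatrix Sum.inr Sum.inl
        * ((hf.posSemidef.submatrix Sum.inl).sqrt)⁻¹).PosSemidef := by
  have hσk : 0 < σk := lt_of_lt_of_le hσ1pos (hk.2 h1.1)
  set c : ℝ := σ1 / σk with hc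
  have hc0 : 0 ≤ c := le_of_lt (div_pos hσ1pos hσk)
  have hcσ : c * σk = σ1 := div_mul_cancel₀ _ hσk.ne'
  set A : Matrix (Fin a) (Fin a) ℂ := f.submatrix Sum.inl Sum.inl with hA
  set B : Matrix (Fin a) (Fin b) ℂ := f.submatrix Sum.inl Sum.inr with hB
  set D : Matrix (Fin b) (Fin b) ℂ := f.submatrix Sum.inr Sum.inr with hD
  have hApd : A.PosDef := aux_posDef_inl hf
  have hDpd : D.PosDef := aux_posDef_inr hf
  haveI : Invertible D := hDpd.isUnit.invertible
  have hBH : f.submatrix Sum.inr Sum.inl = Bᴴ := by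
    ext i j
    simp only [conjTranspose_apply, hB, submatrix_apply]
    exact (hf.isHermitian.apply _ _).symm
  have hfB : f = Matrix.fromBlocks A B Bᴴ D := by
    rw [← hBH]
    exact (Matrix.fromBlocks_toBlocks f).symm
  -- eigenvalue bounds
  have key₁ : (f - (σ1 : ℂ) • 1).PosSemidef :=
    aux_sub_smul_one hf.isHermitian (fun i => h1.2 ⟨i, rfl⟩)
  have key₂ : ((σk : ℂ) • 1 - f).PosSemidef :=
    aux_smul_one_sub hf.isHermitian (fun i => hk.2 ⟨i, rfl⟩)
  -- A ≤ σk • 1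
  have hAle : ((σk : ℂ) • 1 - A).PosSemidef := by
    have h := key₂.submatrix Sum.inl
    have heq : ((σk : ℂ) • 1 - f).submatrix (Sum.inl : Fin a → Fin a ⊕ Fin b) Sum.inl
        = (σk : ℂ) • 1 - A := by
      ext i j
      simp [Matrix.submatrix_apply, Matrix.sub_apply, Matrix.smul_apply, Matrix.one_apply,
        Sum.inl.injEq, hA]
    rwa [heq] at h
  -- the Schur-type bound
  have h₁ : ((σ1 : ℂ) • 1 - (c : ℂ) • A).PosSemidef := by
    have h := aux_smul_psd hAle hc0
    have heq : (c : ℂ) • ((σk : ℂ) • 1 - A) = (σ1 : ℂ) • 1 - (c : ℂ) • A := by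
      rw [smul_sub, smul_smul]
      congr 2
      rw [← Complex.ofReal_mul, hcσ]
    rwa [heq] at h
  have h₂ : ((σ1 : ℂ) • (1 : Matrix (Fin b) (Fin b) ℂ)).PosSemidef :=
    aux_smul_psd Matrix.PosSemidef.one (le_of_lt hσ1pos)
  have hblocks : (Matrix.fromBlocks (((1 - c : ℝ) : ℂ) • A) B Bᴴ D).PosSemidef := by
    have hsum := key₁.add (aux_fromBlocks_diag_psd h₁ h₂)
    have heq : f - (σ1 : ℂ) • 1
        + Matrix.fromBlocks ((σ1 : ℂ) • 1 - (c : ℂ) • A) 0 0 ((σ1 : ℂ) • 1)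
        = Matrix.fromBlocks (((1 - c : ℝ) : ℂ) • A) B Bᴴ D := by
      rw [hfB, ← Matrix.fromBlocks_one, Matrix.fromBlocks_smul]
      ext i j
      rcases i with i | i <;> rcases j with j | j <;>
        simp [Matrix.fromBlocks, Matrix.smul_apply, Matrix.sub_apply, Matrix.add_apply] <;>
        push_cast <;> ring
    rwa [heq] at hsum
  have hX : ((((1 - c : ℝ) : ℂ) • A) - B * D⁻¹ * Bᴴ).PosSemidef :=
    (Matrix.PosDef.fromBlocks₂₂ _ _ hDpd).mp hblocks
  -- conjugate by R⁻¹
  set R : Matrix (Fin a) (Fin a) ℂ := (hf.posSemidef.submatrix Sum.inl).sqrt with hR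
  have hRpsd : R.PosSemidef := (hf.posSemidef.submatrix Sum.inl).posSemidef_sqrt
  have hRR : R * R = A := (hf.posSemidef.submatrix Sum.inl).sqrt_mul_self
  have hRdet : IsUnit R.det := by
    have hAdet : IsUnit A.det := (Matrix.isUnit_iff_isUnit_det _).mp hApd.isUnit
    have : R.det * R.det = A.det := by rw [← Matrix.det_mul, hRR]
    exact isUnit_of_mul_isUnit_left (this ▸ hAdet)
  have h1R : R⁻¹ * A * R⁻¹ = 1 := by
    rw [← hRR, ← Matrix.mul_assoc R⁻¹ R R, Matrix.nonsing_inv_mul _ hRdet, Matrix.one_mul,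
      Matrix.mul_nonsing_inv _ hRdet]
  have hinvH : (R⁻¹)ᴴ = R⁻¹ := by
    rw [Matrix.conjTranspose_nonsing_inv, hRpsd.isHermitian.eq]
  have final := hX.mul_mul_conjTranspose_same R⁻¹
  rw [hinvH] at final
  have hgoal : ((1 - σ1 / σk : ℝ) : ℂ) • (1 : Matrix (Fin a) (Fin a) ℂ)
      - R⁻¹ * B * D⁻¹ * f.submatrix Sum.inr Sum.inl * R⁻¹
      = R⁻¹ * ((((1 - c : ℝ) : ℂ) • A) - B * D⁻¹ * Bᴴ) * R⁻¹ := by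
    rw [hBH, Matrix.mul_sub, Matrix.sub_mul, Matrix.mul_smul, Matrix.smul_mul, h1R]
    simp only [Matrix.mul_assoc]
    rfl
  rw [hgoal]
  exact final
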